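/- Let (N, (X_i)_{i≥1}) be a random vector with N a positive-integer-valued random variable and X_i ∈ ℝ^d, such that E[∑_{i=1}^N exp(λ‖X_i‖)] < ∞ for all λ ≥ 0. Suppose there is no pair (q, c) ∈ (ℝ^d \ {0}) × ℝ with ⟨q, X_i⟩ = c almost surely for all 1 ≤ i ≤ N. Then the function P̃_X : q ↦ log E[∑_{i=1}^N exp(⟨q, X_i⟩)] is strictly convex on ℝ^d. -/

import Mathlib

open MeasureTheory
open scoped RealInnerProductSpace ENNReal

lemma strictConvexOn_of_convexOn_of_midpoint {E : Type*} [AddCommGroup E] [Module ℝ E]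
    [NoZeroSMulDivisors ℝ E]
    {f : E → ℝ} (hc : ConvexOn ℝ Set.univ f)
    (hm : ∀ x y : E, x ≠ y → f ((1/2 : ℝ) • x + (1/2 : ℝ) • y) < f x / 2 + f y / 2) :
    StrictConvexOn ℝ Set.univ f := by
  refine ⟨convex_univ, ?_⟩
  intro x _ y _ hxy a b ha hb hab
  set ε := min a b with hε
  have hε0 : 0 < ε := lt_min ha hb
  have hεa : ε ≤ a := min_le_left _ _
  have hεb : ε ≤ b := min_le_right _ _
  have h12 : (a + ε) • x + (b - ε) • y ≠ (a - ε) • x + (b + ε) • y := by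
    intro h
    have h2 : (2 * ε) • (x - y) = 0 := by
      have h3 := sub_eq_zero.2 h
      rw [smul_sub]
      linear_combination (norm := module) h3
    rcases smul_eq_zero.1 h2 with h' | h'
    · nlinarith
    · exact hxy (sub_eq_zero.1 h')
  have h1 : f ((a + ε) • x + (b - ε) • y) ≤ (a+ε) * f x + (b-ε) * f y :=
    hc.2 (Set.mem_univ x) (Set.mem_univ y) (by linarith) (by linarith) (by linarith)
  have h2 : f ((a - ε) • x + (b + ε) • y) ≤ (a-ε) * f x + (b+ε) * f y :=
    hc.2 (Set.mem_univ x) (Set.mem_univ y) (by linarith) (by linarith) (by linarith)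
  have hmid : (1/2:ℝ) • ((a + ε) • x + (b - ε) • y) + (1/2:ℝ) • ((a - ε) • x + (b + ε) • y)
      = a • x + b • y := by module
  have hlt := hm _ _ h12
  rw [hmid] at hlt
  simp only [smul_eq_mul]
  linarith

theorem pressure_strictConvexOn {d : ℕ} {Ω : Type*} [MeasurableSpace Ω]
    (μ : Measure Ω) [IsProbabilityMeasure μ]
    (N : Ω → ℕ) (hN : ∀ ω, 1 ≤ N ω) (hNmeas : Measurable N)
    (X : ℕ → Ω → EuclideanSpace ℝ (Fin d)) (hXmeas : ∀ i, Measurable (X i))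
    (hmom : ∀ lam : ℝ, 0 ≤ lam →
      Integrable (fun ω => ∑ i ∈ Finset.Icc 1 (N ω), Real.exp (lam * ‖X i ω‖)) μ)
    (hnd : ¬ ∃ q : EuclideanSpace ℝ (Fin d), q ≠ 0 ∧ ∃ c : ℝ,
      ∀ᵐ ω ∂μ, ∀ i ∈ Finset.Icc 1 (N ω), ⟪q, X i ω⟫ = c) :
    StrictConvexOn ℝ Set.univ
      (fun q : EuclideanSpace ℝ (Fin d) =>
        Real.log (∫ ω, ∑ i ∈ Finset.Icc 1 (N ω), Real.exp ⟪q, X i ω⟫ ∂μ)) := by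
  set G : EuclideanSpace ℝ (Fin d) → Ω → ℝ :=
    fun q ω => ∑ i ∈ Finset.Icc 1 (N ω), Real.exp ⟪q, X i ω⟫ with hG
  set F : EuclideanSpace ℝ (Fin d) → ℝ := fun q => ∫ ω, G q ω ∂μ with hF
  -- measurability of N-indexed sums
  have hsum_meas : ∀ (f : ℕ → Ω → ℝ), (∀ i, Measurable (f i)) →
      Measurable (fun ω => ∑ i ∈ Finset.Icc 1 (N ω), f i ω) := by
    intro f hf
    have h1 : Measurable (fun p : Ω × ℕ => ∑ i ∈ Finset.Icc 1 p.2, f i p.1) := by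
      apply measurable_from_prod_countable_left
      intro n
      simpa using Finset.measurable_sum (Finset.Icc 1 n) fun i _ => hf i
    exact h1.comp (measurable_id.prodMk hNmeas)
  have hGmeas : ∀ q : EuclideanSpace ℝ (Fin d), Measurable (G q) := fun q =>
    hsum_meas _ fun i => (Real.measurable_exp.comp (measurable_const.inner (hXmeas i)))
  have hGnonneg : ∀ (q : EuclideanSpace ℝ (Fin d)) ω, 0 ≤ G q ω := fun q ω =>
    Finset.sum_nonneg fun i _ => (Real.exp_pos _).le
  have hGpos : ∀ (q : EuclideanSpace ℝ (Fin d)) ω, 0 < G q ω := fun q ω =>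
    Finset.sum_pos (fun i _ => Real.exp_pos _) (Finset.nonempty_Icc.2 (hN ω))
  have hGint : ∀ q : EuclideanSpace ℝ (Fin d), Integrable (G q) μ := by
    intro q
    refine (hmom ‖q‖ (norm_nonneg q)).mono' ((hGmeas q).aestronglyMeasurable) ?_
    filter_upwards with ω
    rw [Real.norm_of_nonneg (hGnonneg q ω)]
    refine Finset.sum_le_sum fun i _ => ?_
    exact Real.exp_le_exp.2 (real_inner_le_norm q _)
  have hFpos : ∀ q : EuclideanSpace ℝ (Fin d), 0 < F q := by
    intro q
    rw [hF]
    rw [integral_pos_iff_support_of_nonneg (hGnonneg q) (hGint q)]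
    have hs : Function.support (G q) = Set.univ :=
      Set.eq_univ_of_forall fun ω => (hGpos q ω).ne'
    rw [hs]
    simp
  -- Hölder inequality for F
  have hHolder : ∀ (x y : EuclideanSpace ℝ (Fin d)) (a b : ℝ), 0 < a → 0 < b → a + b = 1 →
      F (a • x + b • y) ≤ F x ^ a * F y ^ b := by
    intro x y a b ha hb hab
    have hpq : Real.HolderConjugate (1/a) (1/b) := by
      rw [Real.holderConjugate_iff]
      constructor
      · rw [lt_div_iff₀ ha]; linarith
      · rw [one_div, inv_inv, one_div, inv_inv]; exact hab
    -- pointwise bound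
    have hpt : ∀ ω, G (a • x + b • y) ω ≤ G x ω ^ a * G y ω ^ b := by
      intro ω
      have h1 : ∀ i, Real.exp ⟪a • x + b • y, X i ω⟫
          = Real.exp ⟪x, X i ω⟫ ^ a * Real.exp ⟪y, X i ω⟫ ^ b := by
        intro i
        rw [inner_add_left, real_inner_smul_left, real_inner_smul_left,
          ← Real.exp_mul, ← Real.exp_mul, ← Real.exp_add]
        ring_nf
      calc G (a • x + b • y) ω
          = ∑ i ∈ Finset.Icc 1 (N ω), Real.exp ⟪x, X i ω⟫ ^ a * Real.exp ⟪y, X i ω⟫ ^ b := by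
            exact Finset.sum_congr rfl fun i _ => h1 i
        _ ≤ (∑ i ∈ Finset.Icc 1 (N ω), (Real.exp ⟪x, X i ω⟫ ^ a) ^ (1/a)) ^ (1/(1/a)) *
            (∑ i ∈ Finset.Icc 1 (N ω), (Real.exp ⟪y, X i ω⟫ ^ b) ^ (1/b)) ^ (1/(1/b)) := by
            have := Real.inner_le_Lp_mul_Lq_of_nonneg (Finset.Icc 1 (N ω)) hpq
              (f := fun i => Real.exp ⟪x, X i ω⟫ ^ a) (g := fun i => Real.exp ⟪y, X i ω⟫ ^ b)
              (fun i _ => Real.rpow_nonneg (Real.exp_pos _).le _)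
              (fun i _ => Real.rpow_nonneg (Real.exp_pos _).le _)
            rw [one_div_one_div, one_div_one_div] at this ⊢
            exact this
        _ = G x ω ^ a * G y ω ^ b := by
            rw [one_div_one_div, one_div_one_div]
            congr 1 <;> congr 1 <;> refine Finset.sum_congr rfl fun i _ => ?_
            · rw [← Real.rpow_mul (Real.exp_pos _).le, mul_one_div_cancel ha.ne',
                Real.rpow_one]
            · rw [← Real.rpow_mul (Real.exp_pos _).le, mul_one_div_cancel hb.ne',
                Real.rpow_one]
    -- lintegral Hölder
    have hmeasE : ∀ q : EuclideanSpace ℝ (Fin d),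
        Measurable (fun ω => ENNReal.ofReal (G q ω)) := fun q => (hGmeas q).ennreal_ofReal
    have key : (∫⁻ ω, ENNReal.ofReal (G (a • x + b • y) ω) ∂μ)
        ≤ (∫⁻ ω, ENNReal.ofReal (G x ω) ∂μ) ^ a * (∫⁻ ω, ENNReal.ofReal (G y ω) ∂μ) ^ b := by
      have step1 : (∫⁻ ω, ENNReal.ofReal (G (a • x + b • y) ω) ∂μ)
          ≤ ∫⁻ ω, (fun ω => (ENNReal.ofReal (G x ω)) ^ a) ω *
              (fun ω => (ENNReal.ofReal (G y ω)) ^ b) ω ∂μ := by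
        refine lintegral_mono fun ω => ?_
        calc ENNReal.ofReal (G (a • x + b • y) ω)
            ≤ ENNReal.ofReal (G x ω ^ a * G y ω ^ b) := ENNReal.ofReal_le_ofReal (hpt ω)
          _ = _ := by
            dsimp only
            rw [ENNReal.ofReal_mul (Real.rpow_nonneg (hGnonneg x ω) _),
              ENNReal.ofReal_rpow_of_pos (hGpos x ω), ENNReal.ofReal_rpow_of_pos (hGpos y ω)]
      refine step1.trans ?_
      have h2 := ENNReal.lintegral_mul_le_Lp_mul_Lq μ hpq
        (f := fun ω => (ENNReal.ofReal (G x ω)) ^ a) (g := fun ω => (ENNReal.ofReal (G y ω)) ^ b)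
        ((ENNReal.continuous_rpow_const.measurable.comp (hmeasE x)).aemeasurable)
        ((ENNReal.continuous_rpow_const.measurable.comp (hmeasE y)).aemeasurable)
      refine h2.trans_eq ?_
      rw [one_div_one_div, one_div_one_div]
      congr 1
      · congr 1
        refine lintegral_congr fun ω => ?_
        rw [← ENNReal.rpow_mul, mul_one_div_cancel ha.ne', ENNReal.rpow_one]
      · congr 1
        refine lintegral_congr fun ω => ?_
        rw [← ENNReal.rpow_mul, mul_one_div_cancel hb.ne', ENNReal.rpow_one]
    -- back to ℝ
    have hofReal : ∀ q : EuclideanSpace ℝ (Fin d),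
        ENNReal.ofReal (F q) = ∫⁻ ω, ENNReal.ofReal (G q ω) ∂μ := fun q =>
      ofReal_integral_eq_lintegral_ofReal (hGint q) (Filter.Eventually.of_forall (hGnonneg q))
    rw [← ENNReal.ofReal_le_ofReal_iff
      (mul_nonneg (Real.rpow_nonneg (hFpos x).le a) (Real.rpow_nonneg (hFpos y).le b))]
    calc ENNReal.ofReal (F (a • x + b • y)) = _ := hofReal _
      _ ≤ _ := key
      _ = ENNReal.ofReal (F x ^ a * F y ^ b) := by
        rw [ENNReal.ofReal_mul (Real.rpow_nonneg (hFpos x).le _),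
          ← ENNReal.ofReal_rpow_of_pos (hFpos x), ← ENNReal.ofReal_rpow_of_pos (hFpos y),
          hofReal x, hofReal y]
  -- convexity of log ∘ F
  have hconv : ConvexOn ℝ Set.univ (fun q => Real.log (F q)) := by
    refine ⟨convex_univ, fun x _ y _ a b ha hb hab => ?_⟩
    rcases eq_or_lt_of_le ha with h | h
    · have hb1 : b = 1 := by linarith
      simp [← h, hb1]
    rcases eq_or_lt_of_le hb with h' | h'
    · have ha1 : a = 1 := by linarith
      simp [← h', ha1]
    calc Real.log (F (a • x + b • y)) ≤ Real.log (F x ^ a * F y ^ b) :=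
          Real.log_le_log (hFpos _) (hHolder x y a b h h' hab)
      _ = a * Real.log (F x) + b * Real.log (F y) := by
          rw [Real.log_mul (Real.rpow_pos_of_pos (hFpos x) a).ne'
            (Real.rpow_pos_of_pos (hFpos y) b).ne',
            Real.log_rpow (hFpos x), Real.log_rpow (hFpos y)]
      _ = a • Real.log (F x) + b • Real.log (F y) := by simp [smul_eq_mul]
  -- strict midpoint inequality
  have hmid : ∀ x y : EuclideanSpace ℝ (Fin d), x ≠ y →
      Real.log (F ((1/2:ℝ) • x + (1/2:ℝ) • y)) <
        Real.log (F x) / 2 + Real.log (F y) / 2 := by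
    intro x y hxy
    set m : EuclideanSpace ℝ (Fin d) := (1/2:ℝ) • x + (1/2:ℝ) • y with hm
    set A := F x with hA
    set C := F y with hC
    set B := F m with hB
    have hApos : 0 < A := hFpos x
    have hCpos : 0 < C := hFpos y
    have hBpos : 0 < B := hFpos m
    have hB2 : B ^ 2 ≤ A * C := by
      have h := hHolder x y (1/2) (1/2) one_half_pos one_half_pos (by norm_num)
      have e1 : A ^ ((1:ℝ)/2) * A ^ ((1:ℝ)/2) = A := by
        rw [← Real.rpow_add hApos]; norm_num
      have e2 : C ^ ((1:ℝ)/2) * C ^ ((1:ℝ)/2) = C := by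
        rw [← Real.rpow_add hCpos]; norm_num
      have hs : A ^ ((1:ℝ)/2) * C ^ ((1:ℝ)/2) * (A ^ ((1:ℝ)/2) * C ^ ((1:ℝ)/2)) = A * C := by
        calc A ^ ((1:ℝ)/2) * C ^ ((1:ℝ)/2) * (A ^ ((1:ℝ)/2) * C ^ ((1:ℝ)/2))
            = A ^ ((1:ℝ)/2) * A ^ ((1:ℝ)/2) * (C ^ ((1:ℝ)/2) * C ^ ((1:ℝ)/2)) := by ring
          _ = A * C := by rw [e1, e2]
      have hmul := mul_le_mul h h hBpos.le
        (mul_nonneg (Real.rpow_nonneg hApos.le _) (Real.rpow_nonneg hCpos.le _))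
      rw [hs] at hmul
      calc B ^ 2 = B * B := sq B
        _ ≤ A * C := hmul
    have hne : B ^ 2 ≠ A * C := by
      intro hEq
      -- Cauchy–Schwarz equality analysis
      have hinner : ∀ (i : ℕ) ω, ⟪m, X i ω⟫ = (⟪x, X i ω⟫ + ⟪y, X i ω⟫) / 2 := by
        intro i ω
        rw [hm, inner_add_left, real_inner_smul_left, real_inner_smul_left]
        ring
      have hu2 : ∀ ω, G x ω = ∑ i ∈ Finset.Icc 1 (N ω),
          Real.exp (⟪x, X i ω⟫ / 2) * Real.exp (⟪x, X i ω⟫ / 2) := by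
        intro ω
        refine Finset.sum_congr rfl fun i _ => ?_
        rw [← Real.exp_add]
        congr 1
        ring
      have hv2 : ∀ ω, G y ω = ∑ i ∈ Finset.Icc 1 (N ω),
          Real.exp (⟪y, X i ω⟫ / 2) * Real.exp (⟪y, X i ω⟫ / 2) := by
        intro ω
        refine Finset.sum_congr rfl fun i _ => ?_
        rw [← Real.exp_add]
        congr 1
        ring
      have huv : ∀ ω, G m ω = ∑ i ∈ Finset.Icc 1 (N ω),
          Real.exp (⟪x, X i ω⟫ / 2) * Real.exp (⟪y, X i ω⟫ / 2) := by
        intro ω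
        refine Finset.sum_congr rfl fun i _ => ?_
        rw [← Real.exp_add, hinner]
        congr 1
        ring
      set W : Ω → ℝ := fun ω => ∑ i ∈ Finset.Icc 1 (N ω),
        (C * Real.exp (⟪x, X i ω⟫ / 2) - B * Real.exp (⟪y, X i ω⟫ / 2)) ^ 2 with hW
      have hWexp : W = fun ω => C^2 * G x ω - 2*C*B * G m ω + B^2 * G y ω := by
        funext ω
        rw [hW]
        calc (∑ i ∈ Finset.Icc 1 (N ω),
            (C * Real.exp (⟪x, X i ω⟫ / 2) - B * Real.exp (⟪y, X i ω⟫ / 2)) ^ 2)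
            = ∑ i ∈ Finset.Icc 1 (N ω),
              (C^2 * (Real.exp (⟪x, X i ω⟫ / 2) * Real.exp (⟪x, X i ω⟫ / 2))
                - 2*C*B * (Real.exp (⟪x, X i ω⟫ / 2) * Real.exp (⟪y, X i ω⟫ / 2))
                + B^2 * (Real.exp (⟪y, X i ω⟫ / 2) * Real.exp (⟪y, X i ω⟫ / 2))) :=
              Finset.sum_congr rfl fun i _ => by ring
          _ = C^2 * G x ω - 2*C*B * G m ω + B^2 * G y ω := by
              rw [Finset.sum_add_distrib, Finset.sum_sub_distrib,
                ← Finset.mul_sum, ← Finset.mul_sum, ← Finset.mul_sum,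
                ← hu2, ← hv2, ← huv]
      have hWint : Integrable W μ := by
        rw [hWexp]
        exact (((hGint x).const_mul _).sub ((hGint m).const_mul _)).add ((hGint y).const_mul _)
      have hWnonneg : ∀ ω, 0 ≤ W ω := fun ω => Finset.sum_nonneg fun i _ => sq_nonneg _
      have hWzero : ∫ ω, W ω ∂μ = 0 := by
        have hcalc : ∫ ω, W ω ∂μ = C^2 * A - 2*C*B * B + B^2 * C := by
          simp only [hWexp]
          have hf1 : Integrable (fun ω => C^2 * G x ω - 2*C*B * G m ω) μ :=
            ((hGint x).const_mul _).sub ((hGint m).const_mul _)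
          have hg1 : Integrable (fun ω => B^2 * G y ω) μ := (hGint y).const_mul _
          have hf2 : Integrable (fun ω => C^2 * G x ω) μ := (hGint x).const_mul _
          have hf3 : Integrable (fun ω => 2*C*B * G m ω) μ := (hGint m).const_mul _
          rw [integral_add hf1 hg1, integral_sub hf2 hf3,
            integral_const_mul, integral_const_mul, integral_const_mul]
        rw [hcalc]
        linear_combination (-C) * hEq
      have hW0 : W =ᵐ[μ] 0 := (integral_eq_zero_iff_of_nonneg hWnonneg hWint).1 hWzero
      refine hnd ⟨x - y, sub_ne_zero.2 hxy, 2 * Real.log (B / C), ?_⟩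
      filter_upwards [hW0] with ω hω
      intro i hi
      have hterm : (C * Real.exp (⟪x, X i ω⟫ / 2) - B * Real.exp (⟪y, X i ω⟫ / 2)) ^ 2 = 0 := by
        have hsum0 : (∑ i ∈ Finset.Icc 1 (N ω),
            (C * Real.exp (⟪x, X i ω⟫ / 2) - B * Real.exp (⟪y, X i ω⟫ / 2)) ^ 2) = 0 := hω
        exact (Finset.sum_eq_zero_iff_of_nonneg fun j _ => sq_nonneg _).1 hsum0 i hi
      have h0 : C * Real.exp (⟪x, X i ω⟫ / 2) = B * Real.exp (⟪y, X i ω⟫ / 2) := by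
        have := pow_eq_zero_iff (n := 2) (by norm_num) |>.1 hterm
        linarith [sub_eq_zero.1 this]
      have hexp : Real.exp (⟪x - y, X i ω⟫ / 2) = B / C := by
        rw [inner_sub_left, sub_div, Real.exp_sub]
        rw [div_eq_div_iff (Real.exp_pos _).ne' hCpos.ne']
        linarith [h0]
      have hlog := congrArg Real.log hexp
      rw [Real.log_exp] at hlog
      linarith
    have hBA : B ^ 2 < A * C := lt_of_le_of_ne hB2 hne
    have h2 : Real.log (B ^ 2) < Real.log (A * C) := Real.log_lt_log (pow_pos hBpos 2) hBA
    rw [Real.log_pow, Real.log_mul hApos.ne' hCpos.ne'] at h2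
    push_cast at h2
    linarith
  exact strictConvexOn_of_convexOn_of_midpoint hconv hmid
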